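/- Let p be a prime and b a positive integer. If p does not divide b, then |D_{p,b}| = (1/(p+b))·binom(p+b, p); if b = kp for some positive integer k, then |D_{p,b}| = (1/(p+b+1))·binom(p+b+1, p). -/

import Mathlib

/-- The number of `(a,b)`-Dyck paths: lattice paths from `(0,a)` to `(b,0)` with unit
south and east steps staying weakly below the segment joining these points, encoded as
weakly increasing sequences `c_1 ≤ … ≤ c_{a-1}` of naturals with `c_l ≤ ⌊b*l/a⌋`. -/
noncomputable def dyckCount (a b : ℕ) : ℕ :=
  Nat.card {c : Fin (a - 1) → ℕ //
    Monotone c ∧ ∀ l : Fin (a - 1), c l ≤ b * (l.1 + 1) / a}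

namespace DyckProof

open Fin.NatCast

variable {n : ℕ} [NeZero n]

/-- number of elements of `s` (as residues) among `0,…,i-1` (periodically). -/
def tcnt (s : Finset (Fin n)) (i : ℕ) : ℕ :=
  ((Finset.range i).filter (fun m : ℕ => ((m : Fin n) ∈ s))).card

lemma tcnt_zero (s : Finset (Fin n)) : tcnt s 0 = 0 := by simp [tcnt]

lemma tcnt_succ (s : Finset (Fin n)) (i : ℕ) :
    tcnt s (i+1) = tcnt s i + (if ((i : Fin n) ∈ s) then 1 else 0) := by
  unfold tcnt
  rw [Finset.range_add_one, Finset.filter_insert]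
  split
  · rw [Finset.card_insert_of_notMem (by simp)]
  · simp

lemma tcnt_eq_of_le (s : Finset (Fin n)) {i : ℕ} (hi : i ≤ n) :
    tcnt s i = (s.filter (fun x => x.val < i)).card := by
  unfold tcnt
  refine Finset.card_bij (fun m _ => (m : Fin n)) ?_ ?_ ?_
  · intro m hm
    simp only [Finset.mem_filter, Finset.mem_range] at hm ⊢
    have hlt : m < n := lt_of_lt_of_le hm.1 hi
    exact ⟨hm.2, by rw [Fin.val_cast_of_lt hlt]; exact hm.1⟩
  · intro m hm m' hm' h
    simp only [Finset.mem_filter, Finset.mem_range] at hm hm'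
    have : (m : Fin n).val = (m' : Fin n).val := by rw [h]
    rwa [Fin.val_cast_of_lt (lt_of_lt_of_le hm.1 hi),
      Fin.val_cast_of_lt (lt_of_lt_of_le hm'.1 hi)] at this
  · intro x hx
    simp only [Finset.mem_filter] at hx
    refine ⟨x.val, ?_, ?_⟩
    · simp only [Finset.mem_filter, Finset.mem_range]
      exact ⟨hx.2, by rw [Fin.cast_val_eq_self]; exact hx.1⟩
    · rw [Fin.cast_val_eq_self]

lemma tcnt_n (s : Finset (Fin n)) : tcnt s n = s.card := by
  rw [tcnt_eq_of_le s le_rfl]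
  congr 1
  apply Finset.filter_true_of_mem
  intro x _; exact x.isLt

lemma tcnt_le (s : Finset (Fin n)) {i : ℕ} (hi : i ≤ n) : tcnt s i ≤ s.card := by
  rw [tcnt_eq_of_le s hi]
  exact Finset.card_filter_le _ _

lemma tcnt_add_n (s : Finset (Fin n)) (i : ℕ) :
    tcnt s (i + n) = tcnt s i + s.card := by
  induction i with
  | zero => simp [tcnt_zero, tcnt_n]
  | succ i ih =>
    have : i + 1 + n = (i + n) + 1 := by ring
    rw [this, tcnt_succ, ih, tcnt_succ]
    have : ((i + n : ℕ) : Fin n) = (i : Fin n) := by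
      push_cast
      simp
    rw [this]
    ring

/-- the height function. -/
def gfun (a : ℕ) (s : Finset (Fin n)) (i : ℕ) : ℤ := n * tcnt s i - a * i

lemma gfun_add_n {a : ℕ} {s : Finset (Fin n)} (hcard : s.card = a) (i : ℕ) :
    gfun a s (i + n) = gfun a s i := by
  unfold gfun
  rw [tcnt_add_n, hcard]
  push_cast
  ring

lemma gfun_mod {a : ℕ} {s : Finset (Fin n)} (hcard : s.card = a) (i : ℕ) :
    gfun a s i = gfun a s (i % n) := by
  conv_lhs => rw [← Nat.mod_add_div i n]
  generalize i / n = q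
  induction q with
  | zero => simp
  | succ q ih =>
    rw [Nat.mul_succ, ← add_assoc, gfun_add_n hcard, ih]

def rot (j : Fin n) (s : Finset (Fin n)) : Finset (Fin n) := s.image (· - j)

lemma mem_rot {j : Fin n} {s : Finset (Fin n)} {x : Fin n} :
    x ∈ rot j s ↔ x + j ∈ s := by
  simp only [rot, Finset.mem_image]
  constructor
  · rintro ⟨y, hy, rfl⟩
    simpa [sub_add_cancel] using hy
  · intro h
    exact ⟨x + j, h, by rw [add_sub_cancel_right]⟩

lemma card_rot (j : Fin n) (s : Finset (Fin n)) : (rot j s).card = s.card :=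
  Finset.card_image_of_injective _ (fun x y h => by
    have : x - j + j = y - j + j := by rw [h]
    simpa [sub_add_cancel] using this)

lemma rot_rot (j k : Fin n) (s : Finset (Fin n)) : rot j (rot k s) = rot (j + k) s := by
  ext x
  simp [mem_rot, add_assoc]

lemma rot_zero (s : Finset (Fin n)) : rot 0 s = s := by
  ext x; simp [mem_rot]

lemma tcnt_rot (j : Fin n) (s : Finset (Fin n)) (i : ℕ) :
    tcnt s (i + j.val) = tcnt (rot j s) i + tcnt s j.val := by
  induction i with
  | zero => simp [tcnt_zero]
  | succ i ih =>
    have h1 : i + 1 + j.val = (i + j.val) + 1 := by ring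
    rw [h1, tcnt_succ, ih, tcnt_succ]
    have h2 : ((i + j.val : ℕ) : Fin n) = (i : Fin n) + j := by
      push_cast
      rfl
    rw [h2]
    have h3 : (if (i : Fin n) + j ∈ s then 1 else 0) = (if (i : Fin n) ∈ rot j s then 1 else 0) := by
      simp only [mem_rot]
    rw [h3]
    ring

lemma gfun_rot {a : ℕ} (j : Fin n) (s : Finset (Fin n)) (i : ℕ) :
    gfun a (rot j s) i = gfun a s (i + j.val) - gfun a s j.val := by
  unfold gfun
  rw [tcnt_rot j s i]
  push_cast
  ring

def Good (a : ℕ) (s : Finset (Fin n)) : Prop := ∀ i : ℕ, 0 ≤ gfun a s i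

lemma good_rot_iff {a : ℕ} {j : Fin n} {s : Finset (Fin n)} (hcard : s.card = a) :
    Good a (rot j s) ↔ ∀ m : ℕ, gfun a s j.val ≤ gfun a s m := by
  constructor
  · intro h m
    have h1 := h (m + n - j.val)
    rw [gfun_rot] at h1
    have h2 : m + n - j.val + j.val = m + n := by
      have : j.val ≤ m + n := le_of_lt (lt_of_lt_of_le j.isLt (by omega))
      omega
    rw [h2, gfun_add_n hcard] at h1
    linarith
  · intro h i
    rw [gfun_rot]
    have := h (i + j.val)
    linarith

lemma gfun_inj {a : ℕ} {s : Finset (Fin n)} (hco : Nat.Coprime a n)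
    {i i' : ℕ} (h : gfun a s i = gfun a s i') : i % n = i' % n := by
  have hdvd : (n : ℤ) ∣ (a * i' : ℕ) - (a * i : ℕ) := by
    unfold gfun at h
    refine ⟨(tcnt s i' : ℤ) - tcnt s i, ?_⟩
    push_cast
    linarith
  have h1 : a * i ≡ a * i' [MOD n] := (Nat.modEq_iff_dvd).mpr hdvd
  have h2 : i ≡ i' [MOD n] := h1.cancel_left_of_coprime hco.symm
  exact h2

lemma exists_unique_good {a : ℕ} {s : Finset (Fin n)} (hco : Nat.Coprime a n)
    (hcard : s.card = a) : ∃! j : Fin n, Good a (rot j s) := by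
  have hn : 0 < n := Nat.pos_of_ne_zero (NeZero.ne n)
  obtain ⟨m, hm_mem, hmin⟩ := Finset.exists_min_image (Finset.range n) (gfun a s)
    ⟨0, Finset.mem_range.mpr hn⟩
  refine ⟨⟨m, Finset.mem_range.mp hm_mem⟩, ?_, ?_⟩
  · dsimp only
    rw [good_rot_iff hcard]
    intro m'
    rw [gfun_mod hcard m']
    exact hmin _ (Finset.mem_range.mpr (Nat.mod_lt _ hn))
  · intro j' hj'
    have hj'min := (good_rot_iff hcard).mp hj'
    have h1 : gfun a s j'.val = gfun a s m :=
      le_antisymm (hj'min m) (by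
        rw [gfun_mod hcard j'.val]
        exact hmin _ (Finset.mem_range.mpr (Nat.mod_lt _ hn)))
    have := gfun_inj hco h1
    apply Fin.ext
    rw [Nat.mod_eq_of_lt j'.isLt, Nat.mod_eq_of_lt (Finset.mem_range.mp hm_mem)] at this
    exact this


section Mu

variable {a : ℕ} (hco : Nat.Coprime a n)

noncomputable def mu (s : Finset (Fin n)) (hcard : s.card = a) : Fin n :=
  (exists_unique_good hco hcard).exists.choose

lemma mu_good (s : Finset (Fin n)) (hcard : s.card = a) :
    Good a (rot (mu hco s hcard) s) :=
  (exists_unique_good hco hcard).exists.choose_spec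

lemma mu_unique (s : Finset (Fin n)) (hcard : s.card = a) {j : Fin n}
    (hj : Good a (rot j s)) : j = mu hco s hcard := by
  obtain ⟨j₀, h₀, huniq⟩ := exists_unique_good hco hcard
  rw [huniq _ hj, huniq _ (mu_good hco s hcard)]

noncomputable def orbitEquiv :
    {s : Finset (Fin n) // s.card = a} ≃
      {s : Finset (Fin n) // s.card = a ∧ Good a s} × Fin n where
  toFun x := (⟨rot (mu hco x.1 x.2) x.1,
      by rw [card_rot]; exact x.2, mu_good hco x.1 x.2⟩, mu hco x.1 x.2)
  invFun p := ⟨rot (-p.2) p.1.1, by rw [card_rot]; exact p.1.2.1⟩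
  left_inv x := by
    apply Subtype.ext
    simp only [rot_rot, neg_add_cancel, rot_zero]
  right_inv p := by
    obtain ⟨⟨v, hv, hgood⟩, j⟩ := p
    have hcard' : (rot (-j) v).card = a := by rw [card_rot]; exact hv
    have hgoodj : Good a (rot j (rot (-j) v)) := by
      rw [rot_rot, add_neg_cancel, rot_zero]; exact hgood
    have hmu : j = mu hco (rot (-j) v) hcard' := mu_unique hco _ _ hgoodj
    refine Prod.ext ?_ ?_
    · apply Subtype.ext
      show rot (mu hco (rot (-j) v) hcard') (rot (-j) v) = v
      rw [← hmu, rot_rot, add_neg_cancel, rot_zero]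
    · show mu hco (rot (-j) v) hcard' = j
      rw [← hmu]

include hco in
lemma card_orbit_count :
    n.choose a = Nat.card {s : Finset (Fin n) // s.card = a ∧ Good a s} * n := by
  have h1 : Nat.card {s : Finset (Fin n) // s.card = a} = n.choose a := by
    rw [Nat.card_eq_fintype_card, Fintype.card_finset_len, Fintype.card_fin]
  rw [← h1, Nat.card_congr (orbitEquiv hco), Nat.card_prod,
    Nat.card_eq_fintype_card (α := Fin n), Fintype.card_fin]

end Mu

section Bij

lemma smono_spread {m : ℕ} {f : Fin m → ℕ} (hf : StrictMono f) :
    ∀ (d : ℕ) (k k' : Fin m), k.val + d = k'.val → f k + d ≤ f k' := by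
  intro d
  induction d with
  | zero =>
    intro k k' h
    have hkk : k = k' := Fin.ext (by omega)
    rw [hkk]
    omega
  | succ d ih =>
    intro k k' h
    have hk'' : k.val + d < m := by omega
    have h1 := ih k ⟨k.val + d, hk''⟩ rfl
    have h2 : f ⟨k.val + d, hk''⟩ < f k' :=
      hf (Fin.lt_def.mpr (show k.val + d < k'.val by omega))
    omega

lemma image_orderEmbOfFin {n : ℕ} (s : Finset (Fin n)) {k : ℕ} (hcard : s.card = k) :
    Finset.image (s.orderEmbOfFin hcard) Finset.univ = s := by
  apply Finset.coe_injective
  rw [Finset.coe_image, Finset.coe_univ, Set.image_univ, Finset.range_orderEmbOfFin]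

lemma card_filter_lt_orderEmb {n k : ℕ} (s : Finset (Fin n)) (hcard : s.card = k)
    (j : Fin k) :
    (s.filter (fun x => x < s.orderEmbOfFin hcard j)).card = j.val := by
  rw [show (s.filter (fun x => x < s.orderEmbOfFin hcard j)).card
      = (((Finset.image (s.orderEmbOfFin hcard) Finset.univ)).filter
        (fun x => x < s.orderEmbOfFin hcard j)).card by rw [image_orderEmbOfFin]]
  rw [Finset.filter_image,
    Finset.card_image_of_injective _ (s.orderEmbOfFin hcard).injective]
  have h1 : (Finset.univ.filter
      (fun x : Fin k => s.orderEmbOfFin hcard x < s.orderEmbOfFin hcard j)) =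
      Finset.univ.filter (fun x : Fin k => x < j) := by
    apply Finset.filter_congr
    intro x _
    exact (s.orderEmbOfFin hcard).lt_iff_lt
  rw [h1]
  have h2 : (Finset.univ.filter (fun x : Fin k => x < j)) = Finset.Iio j := by
    ext x; simp
  rw [h2, Fin.card_Iio]

lemma tcnt_orderEmb {n k : ℕ} [NeZero n] (s : Finset (Fin n)) (hcard : s.card = k)
    (j : Fin k) : tcnt s (s.orderEmbOfFin hcard j).val = j.val := by
  rw [tcnt_eq_of_le s (le_of_lt (Fin.is_lt _))]
  have h1 : (s.filter fun x => x.val < (s.orderEmbOfFin hcard j).val)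
      = s.filter fun x => x < s.orderEmbOfFin hcard j := by
    apply Finset.filter_congr
    intro x _
    exact Iff.symm Fin.lt_def
  rw [h1, card_filter_lt_orderEmb]

lemma good_iff_pos {n : ℕ} [NeZero n] {a : ℕ} (ha : a ≤ n) (s : Finset (Fin n))
    (hcard : s.card = a) :
    Good a s ↔ ∀ k : Fin a, a * (s.orderEmbOfFin hcard k).val ≤ n * k.val := by
  constructor
  · intro hg k
    have h1 := hg (s.orderEmbOfFin hcard k).val
    unfold gfun at h1
    rw [tcnt_orderEmb s hcard k] at h1
    have : (a : ℤ) * (s.orderEmbOfFin hcard k).val ≤ (n : ℤ) * k.val := by linarith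
    exact_mod_cast this
  · intro h i
    rw [gfun_mod hcard i]
    have hi'lt : i % n < n := Nat.mod_lt _ (Nat.pos_of_ne_zero (NeZero.ne n))
    unfold gfun
    have htle : tcnt s (i % n) ≤ a := hcard ▸ tcnt_le s (le_of_lt hi'lt)
    rcases eq_or_lt_of_le htle with heq | hlt
    · rw [heq]
      have h1 : ((i % n : ℕ) : ℤ) ≤ (n : ℤ) := by exact_mod_cast hi'lt.le
      have h2 : (0:ℤ) ≤ (a:ℤ) := Int.natCast_nonneg a
      nlinarith
    · set t := tcnt s (i % n) with ht
      set k : Fin a := ⟨t, hlt⟩ with hk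
      have hle : i % n ≤ (s.orderEmbOfFin hcard k).val := by
        by_contra hc
        push_neg at hc
        have hsub : Finset.image
            (fun j : Fin (t+1) => s.orderEmbOfFin hcard ⟨j.val, by omega⟩)
            Finset.univ ⊆ s.filter (fun x => x.val < i % n) := by
          intro x hx
          simp only [Finset.mem_image] at hx
          obtain ⟨j, _, rfl⟩ := hx
          refine Finset.mem_filter.mpr ⟨Finset.orderEmbOfFin_mem s hcard _, ?_⟩
          have hj : (⟨j.val, by omega⟩ : Fin a) ≤ k := by
            rw [Fin.le_def]
            simp only [hk]
            omega
          have := (s.orderEmbOfFin hcard).le_iff_le.mpr hj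
          rw [Fin.le_def] at this
          omega
        have hinj : Function.Injective
            (fun j : Fin (t+1) => s.orderEmbOfFin hcard ⟨j.val, by omega⟩) := by
          intro x y hxy
          have := (s.orderEmbOfFin hcard).injective hxy
          have := congrArg Fin.val this
          simp only at this
          exact Fin.ext this
        have hcount : t + 1 ≤ tcnt s (i % n) := by
          rw [tcnt_eq_of_le s (le_of_lt hi'lt)]
          calc t + 1 = (Finset.image
              (fun j : Fin (t+1) => s.orderEmbOfFin hcard ⟨j.val, by omega⟩)
              Finset.univ).card := by
                rw [Finset.card_image_of_injective _ hinj, Finset.card_univ,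
                  Fintype.card_fin]
            _ ≤ _ := Finset.card_le_card hsub
        omega
      have h2 := h k
      have h3 : a * (i % n) ≤ n * t :=
        le_trans (Nat.mul_le_mul_left a hle) h2
      have : (a : ℤ) * (i % n : ℕ) ≤ (n : ℤ) * t := by exact_mod_cast h3
      linarith

variable {a b : ℕ}

/-- positions of south steps determined by a Dyck sequence -/
def pval (c : Fin (a-1) → ℕ) (k : Fin a) : ℕ :=
  if h : k.val = 0 then 0 else c ⟨k.val - 1, by omega⟩ + k.val

lemma pval_smono {c : Fin (a-1) → ℕ} (hc1 : Monotone c) : StrictMono (pval c) := by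
  intro k k' hkk'
  rw [Fin.lt_def] at hkk'
  unfold pval
  rcases Nat.eq_zero_or_pos k.val with h0 | hpos
  · rw [dif_pos h0, dif_neg (by omega)]
    omega
  · rw [dif_neg (by omega), dif_neg (by omega)]
    have hle : c ⟨k.val - 1, by omega⟩ ≤ c ⟨k'.val - 1, by omega⟩ :=
      hc1 (Fin.le_def.mpr (show k.val - 1 ≤ k'.val - 1 by omega))
    exact add_lt_add_of_le_of_lt hle hkk'

lemma pval_lt (ha : 0 < a) (hb : 0 < b) {c : Fin (a-1) → ℕ}
    (hc2 : ∀ l : Fin (a-1), c l ≤ b * (l.1+1) / a) (k : Fin a) :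
    pval c k < a + b := by
  unfold pval
  rcases Nat.eq_zero_or_pos k.val with h0 | hpos
  · rw [dif_pos h0]; omega
  · rw [dif_neg (by omega)]
    have h1 := hc2 ⟨k.val - 1, by omega⟩
    have h2 : b * ((k.val - 1) + 1) / a < b := by
      rw [Nat.div_lt_iff_lt_mul ha]
      have h4 : (k.val - 1) + 1 < a := by omega
      exact mul_lt_mul_of_pos_left h4 hb
    simp only at h1
    have := k.isLt
    omega

lemma pval_good (ha : 0 < a) (hb : 0 < b) [NeZero (a+b)] {c : Fin (a-1) → ℕ}
    (hc2 : ∀ l : Fin (a-1), c l ≤ b * (l.1+1) / a) (k : Fin a) :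
    a * pval c k ≤ (a + b) * k.val := by
  unfold pval
  rcases Nat.eq_zero_or_pos k.val with h0 | hpos
  · rw [dif_pos h0]; omega
  · rw [dif_neg (by omega)]
    have h1 := hc2 ⟨k.val - 1, by omega⟩
    simp only at h1
    have h2 : c ⟨k.val - 1, by omega⟩ * a ≤ b * ((k.val - 1) + 1) :=
      (Nat.le_div_iff_mul_le ha).mp h1
    have h3 : (k.val - 1) + 1 = k.val := by omega
    rw [h3] at h2
    nlinarith

lemma pval_zero {c : Fin (a-1) → ℕ} (k : Fin a) (h : k.val = 0) : pval c k = 0 := by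
  unfold pval; rw [dif_pos h]

lemma pval_succ {c : Fin (a-1) → ℕ} (l : Fin (a-1)) (h : l.val + 1 < a) :
    pval c ⟨l.val+1, h⟩ = c l + (l.val + 1) := by
  unfold pval
  rw [dif_neg (Nat.succ_ne_zero l.val)]
  simp only [Nat.add_sub_cancel, Fin.eta]

lemma card_dyck_eq (a b : ℕ) (ha : 0 < a) (hb : 0 < b) [NeZero (a+b)] :
    Nat.card {c : Fin (a - 1) → ℕ //
      Monotone c ∧ ∀ l : Fin (a - 1), c l ≤ b * (l.1 + 1) / a} =
    Nat.card {s : Finset (Fin (a+b)) // s.card = a ∧ Good a s} := by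
  have han : a ≤ a + b := by omega
  -- data of the forward map
  have hsm : ∀ (c : Fin (a-1) → ℕ), Monotone c →
      ∀ (hlt : ∀ k : Fin a, pval c k < a + b), StrictMono
        (fun k : Fin a => (⟨pval c k, hlt k⟩ : Fin (a+b))) :=
    fun c hc1 hlt x y hxy => Fin.lt_def.mpr (pval_smono hc1 hxy)
  have hcardimg : ∀ (c : Fin (a-1) → ℕ) (hc1 : Monotone c)
      (hlt : ∀ k : Fin a, pval c k < a + b),
      (Finset.image (fun k : Fin a => (⟨pval c k, hlt k⟩ : Fin (a+b)))
        Finset.univ).card = a := by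
    intro c hc1 hlt
    rw [Finset.card_image_of_injective _ (hsm c hc1 hlt).injective,
      Finset.card_univ, Fintype.card_fin]
  have hfm_eq : ∀ (c : Fin (a-1) → ℕ) (hc1 : Monotone c)
      (hlt : ∀ k : Fin a, pval c k < a + b),
      (fun k : Fin a => (⟨pval c k, hlt k⟩ : Fin (a+b))) =
        (Finset.image (fun k : Fin a => (⟨pval c k, hlt k⟩ : Fin (a+b)))
          Finset.univ).orderEmbOfFin (hcardimg c hc1 hlt) := by
    intro c hc1 hlt
    exact Finset.orderEmbOfFin_unique (hcardimg c hc1 hlt)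
      (fun k => Finset.mem_image_of_mem _ (Finset.mem_univ k)) (hsm c hc1 hlt)
  have hgoodimg : ∀ (c : Fin (a-1) → ℕ) (hc1 : Monotone c)
      (hc2 : ∀ l : Fin (a-1), c l ≤ b * (l.1+1) / a)
      (hlt : ∀ k : Fin a, pval c k < a + b),
      Good a (Finset.image (fun k : Fin a => (⟨pval c k, hlt k⟩ : Fin (a+b)))
        Finset.univ) := by
    intro c hc1 hc2 hlt
    rw [good_iff_pos han _ (hcardimg c hc1 hlt)]
    intro k
    rw [← hfm_eq c hc1 hlt]
    exact pval_good ha hb hc2 k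
  -- the forward map
  set F : {c : Fin (a - 1) → ℕ //
      Monotone c ∧ ∀ l : Fin (a - 1), c l ≤ b * (l.1 + 1) / a} →
      {s : Finset (Fin (a+b)) // s.card = a ∧ Good a s} :=
    fun c => ⟨Finset.image
        (fun k : Fin a => (⟨pval c.1 k, pval_lt ha hb c.2.2 k⟩ : Fin (a+b)))
        Finset.univ,
      hcardimg c.1 c.2.1 _, hgoodimg c.1 c.2.1 c.2.2 _⟩ with hF
  apply Nat.card_eq_of_bijective F
  constructor
  · -- injective
    rintro ⟨c, hc1, hc2⟩ ⟨c', hc1', hc2'⟩ hcc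
    have himg : Finset.image
        (fun k : Fin a => (⟨pval c k, pval_lt ha hb hc2 k⟩ : Fin (a+b)))
        Finset.univ =
        Finset.image
        (fun k : Fin a => (⟨pval c' k, pval_lt ha hb hc2' k⟩ : Fin (a+b)))
        Finset.univ := congrArg Subtype.val hcc
    have h2 : (fun k : Fin a => (⟨pval c' k, pval_lt ha hb hc2' k⟩ : Fin (a+b))) =
        (fun k : Fin a => (⟨pval c k, pval_lt ha hb hc2 k⟩ : Fin (a+b))) := by
      rw [hfm_eq c hc1 (pval_lt ha hb hc2)]
      apply Finset.orderEmbOfFin_unique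
      · intro k
        rw [himg]
        exact Finset.mem_image_of_mem _ (Finset.mem_univ k)
      · exact hsm c' hc1' (pval_lt ha hb hc2')
    have h3 : ∀ k : Fin a, pval c k = pval c' k := by
      intro k
      have := congrFun h2 k
      have := congrArg Fin.val this
      simpa using this.symm
    apply Subtype.ext
    funext l
    have hl : l.val + 1 < a := by have := l.isLt; omega
    have h4 := h3 ⟨l.val + 1, hl⟩
    rw [pval_succ l hl, pval_succ l hl] at h4
    show c l = c' l
    omega
  · -- surjective
    rintro ⟨s, hcard, hgood⟩
    set pos := s.orderEmbOfFin hcard with hpos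
    have hposmono : StrictMono (fun k : Fin a => (pos k).val) :=
      fun x y hxy => Fin.lt_def.mp (pos.strictMono hxy)
    have hge : ∀ k : Fin a, k.val ≤ (pos k).val := by
      intro k
      have h7 : (pos ⟨0, ha⟩).val + k.val ≤ (pos k).val :=
        smono_spread hposmono k.val ⟨0, ha⟩ k (Nat.zero_add k.val)
      omega
    have hcond := (good_iff_pos han s hcard).mp hgood
    have hlt1 : ∀ l : Fin (a-1), l.val + 1 < a := fun l => by
      have := l.isLt; omega
    set c : Fin (a-1) → ℕ :=
      fun l => (pos ⟨l.val + 1, hlt1 l⟩).val - (l.val + 1) with hc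
    have hceq : ∀ l : Fin (a-1), c l = (pos ⟨l.val + 1, hlt1 l⟩).val - (l.val + 1) :=
      fun l => rfl
    have hc1 : Monotone c := by
      intro l l' hll'
      have hll2 : l.val ≤ l'.val := hll'
      have hspread : (pos ⟨l.val + 1, hlt1 l⟩).val + (l'.val - l.val)
          ≤ (pos ⟨l'.val + 1, hlt1 l'⟩).val :=
        smono_spread hposmono (l'.val - l.val) ⟨l.val + 1, hlt1 l⟩
          ⟨l'.val + 1, hlt1 l'⟩ (show l.val + 1 + (l'.val - l.val) = l'.val + 1 by omega)
      have hg1 := hge ⟨l.val + 1, hlt1 l⟩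
      have hg2 := hge ⟨l'.val + 1, hlt1 l'⟩
      have hg1' : l.val + 1 ≤ (pos ⟨l.val + 1, hlt1 l⟩).val := hg1
      have hg2' : l'.val + 1 ≤ (pos ⟨l'.val + 1, hlt1 l'⟩).val := hg2
      rw [hceq l, hceq l']
      omega
    have hc2 : ∀ l : Fin (a-1), c l ≤ b * (l.1+1) / a := by
      intro l
      have h1 : a * (pos ⟨l.val + 1, hlt1 l⟩).val ≤ (a+b) * (l.val + 1) :=
        hcond ⟨l.val + 1, hlt1 l⟩
      have hg1 : l.val + 1 ≤ (pos ⟨l.val + 1, hlt1 l⟩).val := hge ⟨l.val + 1, hlt1 l⟩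
      rw [Nat.le_div_iff_mul_le ha, hceq l, Nat.sub_mul, Nat.sub_le_iff_le_add]
      nlinarith
    refine ⟨⟨c, hc1, hc2⟩, ?_⟩
    apply Subtype.ext
    show Finset.image _ Finset.univ = s
    have hfk : ∀ k : Fin a,
        (⟨pval c k, pval_lt ha hb hc2 k⟩ : Fin (a+b)) = pos k := by
      intro k
      apply Fin.ext
      show pval c k = (pos k).val
      rcases Nat.eq_zero_or_pos k.val with h0 | hposk
      · rw [pval_zero k h0]
        have h5 : a * (pos k).val ≤ (a+b) * k.val := hcond k
        rw [h0, Nat.mul_zero] at h5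
        have h6 : a * (pos k).val = 0 := Nat.le_zero.mp h5
        rcases Nat.mul_eq_zero.mp h6 with h | h
        · omega
        · omega
      · have hkl : (k.val - 1) < a - 1 := by have := k.isLt; omega
        have hk : k = ⟨(⟨k.val - 1, hkl⟩ : Fin (a-1)).val + 1,
            hlt1 ⟨k.val - 1, hkl⟩⟩ := Fin.ext (show k.val = k.val - 1 + 1 by omega)
        rw [hk, pval_succ ⟨k.val - 1, hkl⟩ (hlt1 ⟨k.val - 1, hkl⟩)]
        rw [hceq]
        have hg1 : (⟨k.val - 1, hkl⟩ : Fin (a-1)).val + 1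
            ≤ (pos ⟨(⟨k.val - 1, hkl⟩ : Fin (a-1)).val + 1, hlt1 ⟨k.val - 1, hkl⟩⟩).val :=
          hge ⟨(⟨k.val - 1, hkl⟩ : Fin (a-1)).val + 1, hlt1 ⟨k.val - 1, hkl⟩⟩
        omega
    rw [show (fun k : Fin a => (⟨pval c k, pval_lt ha hb hc2 k⟩ : Fin (a+b)))
        = fun k => pos k from funext hfk]
    exact image_orderEmbOfFin s hcard

lemma key (a b : ℕ) (ha : 0 < a) (hb : 0 < b) (hco : Nat.Coprime a b) :
    (a + b) * dyckCount a b = (a + b).choose a := by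
  haveI : NeZero (a+b) := ⟨by omega⟩
  have hco' : Nat.Coprime a (a+b) := by
    rw [add_comm]
    exact Nat.coprime_add_self_right.mpr hco
  rw [dyckCount, card_dyck_eq a b ha hb, card_orbit_count hco']
  ring

end Bij

end DyckProof

theorem dyck_count_prime (p b : ℕ) (hp : Nat.Prime p) (hb : 0 < b) :
    (¬ p ∣ b → (dyckCount p b : ℚ) = ((p + b).choose p : ℚ) / ((p + b : ℕ) : ℚ)) ∧
    (∀ k : ℕ, 1 ≤ k → b = k * p →
      (dyckCount p b : ℚ) = ((p + b + 1).choose p : ℚ) / ((p + b + 1 : ℕ) : ℚ)) := by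
  have hp2 := hp.two_le
  constructor
  · intro hnd
    have hco : Nat.Coprime p b := (Nat.Prime.coprime_iff_not_dvd hp).mpr hnd
    have h := DyckProof.key p b (by omega) hb hco
    have hne : ((p + b : ℕ) : ℚ) ≠ 0 := Nat.cast_ne_zero.mpr (by omega)
    rw [eq_div_iff hne, mul_comm]
    exact_mod_cast congrArg (Nat.cast (R := ℚ)) h
  · intro k hk hbk
    have heq : dyckCount p b = dyckCount p (b+1) := by
      unfold dyckCount
      apply Nat.card_congr
      apply Equiv.subtypeEquivRight
      intro c
      have hdiv : ∀ l : Fin (p-1), b * (l.1+1) / p = (b+1) * (l.1+1) / p := by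
        intro l
        have hl : l.val + 1 < p := by have := l.isLt; omega
        subst hbk
        rw [show (k * p) * (l.val + 1) = (k * (l.val+1)) * p by ring,
          Nat.mul_div_cancel _ (show 0 < p by omega)]
        rw [show (k * p + 1) * (l.val + 1) = (l.val+1) + (k * (l.val+1)) * p by ring,
          Nat.add_mul_div_right _ _ (show 0 < p by omega),
          Nat.div_eq_of_lt hl, zero_add]
      constructor
      · rintro ⟨h1, h2⟩; exact ⟨h1, fun l => by rw [← hdiv l]; exact h2 l⟩
      · rintro ⟨h1, h2⟩; exact ⟨h1, fun l => by rw [hdiv l]; exact h2 l⟩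
    have hco : Nat.Coprime p (b+1) := by
      rw [Nat.Prime.coprime_iff_not_dvd hp]
      intro hdvd
      subst hbk
      have h1 : p ∣ 1 := (Nat.dvd_add_right (dvd_mul_left p k)).mp hdvd
      have := Nat.dvd_one.mp h1
      omega
    have h := DyckProof.key p (b+1) (by omega) (by omega) hco
    have hne : ((p + b + 1 : ℕ) : ℚ) ≠ 0 := Nat.cast_ne_zero.mpr (by omega)
    rw [eq_div_iff hne, heq, mul_comm]
    have h3 : p + (b+1) = p + b + 1 := by omega
    rw [h3] at h
    exact_mod_cast congrArg (Nat.cast (R := ℚ)) h
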